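/- Let t > 0 satisfy cosh(t)cos(t) = 1 and let η_t(x) = cosh(tx) + cos(tx) - B·(sinh(tx) + sin(tx)) with B = (cosh(t)-cos(t))/(sinh(t)-sin(t)). Then ∫_0^1 η_t(x)² dx = 1. -/

import Mathlib

open Real

/-- The antiderivative (scaled) used for the beam eigenfunction normalization. -/
noncomputable def beamG (B u : ℝ) : ℝ :=
  (u + Real.sinh u * Real.cosh u) / 2 + (u + Real.sin u * Real.cos u) / 2
    + Real.cosh u * Real.sin u + Real.sinh u * Real.cos u
    - B * (Real.cosh u ^ 2 + Real.sin u ^ 2 + 2 * (Real.sinh u * Real.sin u))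
    + B ^ 2 * ((Real.sinh u * Real.cosh u - Real.sin u * Real.cos u) / 2
        + Real.cosh u * Real.sin u - Real.sinh u * Real.cos u)

lemma beamG_hasDerivAt (B t x : ℝ) (ht : t ≠ 0) :
    HasDerivAt (fun y : ℝ => beamG B (t * y) / t)
      ((Real.cosh (t * x) + Real.cos (t * x)
        - B * (Real.sinh (t * x) + Real.sin (t * x))) ^ 2) x := by
  have hid : HasDerivAt (fun y : ℝ => t * y) t x := by
    simpa using (hasDerivAt_id x).const_mul t
  have hch : HasDerivAt (fun y : ℝ => Real.cosh (t * y)) (Real.sinh (t * x) * t) x :=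
    (Real.hasDerivAt_cosh (t * x)).comp x hid
  have hsh : HasDerivAt (fun y : ℝ => Real.sinh (t * y)) (Real.cosh (t * x) * t) x :=
    (Real.hasDerivAt_sinh (t * x)).comp x hid
  have hco : HasDerivAt (fun y : ℝ => Real.cos (t * y)) (-Real.sin (t * x) * t) x :=
    (Real.hasDerivAt_cos (t * x)).comp x hid
  have hsi : HasDerivAt (fun y : ℝ => Real.sin (t * y)) (Real.cos (t * x) * t) x :=
    (Real.hasDerivAt_sin (t * x)).comp x hid
  have hG := (((((hid.add (hsh.mul hch)).div_const 2).add
        ((hid.add (hsi.mul hco)).div_const 2)).add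
        (hch.mul hsi) |>.add (hsh.mul hco)).sub
        ((((hch.pow 2).add (hsi.pow 2)).add
          ((hsh.mul hsi).const_mul 2)).const_mul B)).add
        (((((hsh.mul hch).sub (hsi.mul hco)).div_const 2).add
          (hch.mul hsi) |>.sub (hsh.mul hco)).const_mul (B ^ 2))
  have h := hG.div_const t
  simp only [beamG]
  convert h using 1
  · exact rfl
  · exact rfl
  · exact rfl
  rw [eq_div_iff ht]
  have h2 : Real.sin (t * x) ^ 2 + Real.cos (t * x) ^ 2 = 1 := Real.sin_sq_add_cos_sq _
  have h3 : Real.cosh (t * x) ^ 2 - Real.sinh (t * x) ^ 2 = 1 :=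
    Real.cosh_sq_sub_sinh_sq _
  push_cast
  linear_combination (t * (1 / 2 - B ^ 2 / 2)) * h3 + (t * (1 / 2 + B ^ 2 / 2)) * h2

theorem h2_eigenfunction_normalized (t : ℝ) (ht : 0 < t)
    (hcc : Real.cosh t * Real.cos t = 1)
    (B : ℝ) (hB : B = (Real.cosh t - Real.cos t) / (Real.sinh t - Real.sin t)) :
    ∫ x in (0:ℝ)..1,
      (Real.cosh (t * x) + Real.cos (t * x) - B * (Real.sinh (t * x) + Real.sin (t * x))) ^ 2
      = 1 := by
  have htne : t ≠ 0 := ne_of_gt ht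
  have hSs : Real.sinh t - Real.sin t > 0 := by
    have h1 : t < Real.sinh t := Real.self_lt_sinh_iff.mpr ht
    have h2 : Real.sin t < t := Real.sin_lt ht
    linarith
  have hSs' : Real.sinh t - Real.sin t ≠ 0 := ne_of_gt hSs
  have hB' : B * (Real.sinh t - Real.sin t) = Real.cosh t - Real.cos t := by
    rw [hB]; field_simp
  have hcont : Continuous fun x : ℝ =>
      (Real.cosh (t * x) + Real.cos (t * x)
        - B * (Real.sinh (t * x) + Real.sin (t * x))) ^ 2 := by
    fun_prop
  have hint := intervalIntegral.integral_eq_sub_of_hasDerivAt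
    (f := fun y : ℝ => beamG B (t * y) / t)
    (fun x _ => beamG_hasDerivAt B t x htne)
    (hcont.intervalIntegrable 0 1)
  rw [hint]
  have hG0 : beamG B (t * 0) = -B := by
    simp [beamG]
  simp only [mul_one, hG0]
  -- reduce to an algebraic identity
  have h2 : Real.sin t ^ 2 + Real.cos t ^ 2 = 1 := Real.sin_sq_add_cos_sq t
  have h3 : Real.cosh t ^ 2 - Real.sinh t ^ 2 = 1 := Real.cosh_sq_sub_sinh_sq t
  have key : beamG B t + B = t := by
    set C := Real.cosh t
    set S := Real.sinh t
    set c := Real.cos t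
    set s := Real.sin t
    have hmain : 2 * (S - s) ^ 2 * (beamG B t + B) = 2 * (S - s) ^ 2 * t := by
      unfold beamG
      linear_combination (6 * S * c - 6 * C * s) * hcc
        + (-(c * s) - 2 * S * c + 4 * C * s - C * S) * (h2 + h3)
        + (2 * (S - s) * (1 - C ^ 2 - s ^ 2 - 2 * S * s)
            + (S * C - s * c + 2 * C * s - 2 * S * c) * (B * (S - s) + C - c)) * hB'
    have hne : (2 : ℝ) * (S - s) ^ 2 ≠ 0 := by positivity
    exact mul_left_cancel₀ hne hmain
  field_simp
  linarith [key]
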